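/- Suppose a line of traps executes from an initial configuration C_l and no agents arrive at its entrance gate during the execution. Then the line eventually reaches a silent configuration C̄_l, and the inner vector β(C̄_l) = (β_{3m}(C̄_l),...,β_1(C̄_l)), the gate vector γ(C̄_l) = (γ_{3m}(C̄_l),...,γ_1(C̄_l)), and the number s(C_l) of agents released by the line to state X before reaching C̄_l depend solely on C_l — they are the same for every sequence of interactions chosen by the scheduler. Explicitly, with y_a = x_a + γ_a(C_l) and x_{3m} = 0: if β_a(C_l)+⌊y_a/2⌋ ≤ m then β_a(C̄_l) = β_a(C_l)+⌊y_a/2⌋, γ_a(C̄_l) = y_a - 2⌊y_a/2⌋ and x_{a-1} = ⌊y_a/2⌋; otherwise β_a(C̄_l) = m, γ_a(C̄_l) = 1 and x_{a-1} = β_a(C_l)+y_a-m-1; and s(C_l) = x_0. -/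

import Mathlib

open Classical Finset

/-- An ordered pair of distinct agents (initiator, responder) chosen by the scheduler. -/
abbrev SchedPair (n : ℕ) : Type := {p : Fin n × Fin n // p.1 ≠ p.2}

/-- One interaction step: the scheduler selects the ordered pair `p` of distinct agents
(initiator `p.1.1`, responder `p.1.2`) and they update their states via the
transition function `δ`. -/
def pstep {S : Type} {n : ℕ} (δ : S → S → S × S) (c : Fin n → S) (p : SchedPair n) :
    Fin n → S := fun a =>
  if a = p.1.1 then (δ (c p.1.1) (c p.1.2)).1
  else if a = p.1.2 then (δ (c p.1.1) (c p.1.2)).2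
  else c a

/-- The configuration after the first `t` interactions of the finite schedule `σ`. -/
def configAt {S : Type} {n T : ℕ} (δ : S → S → S × S) (c0 : Fin n → S)
    (σ : Fin T → SchedPair n) (t : ℕ) : Fin n → S :=
  ((List.ofFn σ).take t).foldl (pstep δ) c0

/-- Probability of the event `E` under the uniform random scheduler running for
`T` interactions (interactions are drawn independently and uniformly at random). -/
noncomputable def schedPr {n : ℕ} (T : ℕ) (E : (Fin T → SchedPair n) → Prop) : ℝ :=
  (((Finset.univ : Finset (Fin T → SchedPair n)).filter fun σ => E σ).card : ℝ) /
    ((Finset.univ : Finset (Fin T → SchedPair n)).card : ℝ)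

/-- The infinite trajectory generated by the schedule `σ` from configuration `c0`. -/
def ptraj {S : Type} {n : ℕ} (δ : S → S → S × S) (c0 : Fin n → S)
    (σ : ℕ → SchedPair n) : ℕ → Fin n → S
  | 0 => c0
  | t + 1 => pstep δ (ptraj δ c0 σ t) (σ t)

/-- States of a line of traps: `3m` traps of size `m+1`, with states
`(a, b)` for `a ∈ [1,3m]` (represented by `Fin (3*m)`, the index `a` standing for
trap `a+1`; index `0` is trap `1`, whose gate is the exit gate, and index `3m-1` is
trap `3m`, whose gate is the entrance gate) and `b ∈ [0,m]` (`b = 0` being the gate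
state), plus the extra state `X` (represented by `Sum.inr ()`). -/
abbrev LineSt (m : ℕ) : Type := (Fin (3 * m) × Fin (m + 1)) ⊕ Unit

/-- Transition function of a line of traps (with `X` as an inert sink, so no agents
arrive at the entrance gate):
`(a,b)+(a,b) → (a,b)+(a,b-1)` for `b > 0`;
`(a,0)+(a,0) → (a,m)+(a-1,0)` for `a > 1`;
`(1,0)+(1,0) → (1,m)+X`. -/
def lineDelta (m : ℕ) : LineSt m → LineSt m → LineSt m × LineSt m := fun s t =>
  match s, t with
  | Sum.inl p, Sum.inl q =>
    if p = q then
      if (p.2 : ℕ) ≠ 0 then (Sum.inl p, Sum.inl (p.1, p.2 - 1))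
      else if (p.1 : ℕ) ≠ 0 then
        (Sum.inl (p.1, Fin.last m),
          Sum.inl (⟨(p.1 : ℕ) - 1, by have := p.1.isLt; omega⟩, 0))
      else (Sum.inl (p.1, Fin.last m), Sum.inr ())
    else (s, t)
  | _, _ => (s, t)

/-- A line of traps in which agents may also enter through the entrance gate
(agents in the extra state `X` are inserted at the entrance gate `(3m, 0)` when two
of them meet). -/
def lineArrDelta (m : ℕ) : LineSt m → LineSt m → LineSt m × LineSt m := fun s t =>
  match s, t with
  | Sum.inr _, Sum.inr _ =>
    if hm : 0 < m then (Sum.inr (), Sum.inl (⟨3 * m - 1, by omega⟩, 0)) else (s, t)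
  | _, _ => lineDelta m s t

/-- `betaOf c a` : the number of agents occupying the inner states of trap `a`
(`a ∈ [1, 3m]`, 1-based). -/
noncomputable def betaOf {m N : ℕ} (c : Fin N → LineSt m) (a : ℕ) : ℕ :=
  ((Finset.univ : Finset (Fin N)).filter fun i =>
    ∃ p : Fin (3 * m) × Fin (m + 1),
      c i = Sum.inl p ∧ (p.1 : ℕ) = a - 1 ∧ 1 ≤ a ∧ (p.2 : ℕ) ≠ 0).card

/-- `gammaOf c a` : the number of agents occupying the gate state of trap `a`
(`a ∈ [1, 3m]`, 1-based). -/
noncomputable def gammaOf {m N : ℕ} (c : Fin N → LineSt m) (a : ℕ) : ℕ :=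
  ((Finset.univ : Finset (Fin N)).filter fun i =>
    ∃ p : Fin (3 * m) × Fin (m + 1),
      c i = Sum.inl p ∧ (p.1 : ℕ) = a - 1 ∧ 1 ≤ a ∧ (p.2 : ℕ) = 0).card

/-- Number of agents in the extra state `X`. -/
noncomputable def xCount {m N : ℕ} (c : Fin N → LineSt m) : ℕ :=
  ((Finset.univ : Finset (Fin N)).filter fun i => c i = Sum.inr ()).card

/-- The predicted numbers `x_a` of agents that trap `a` receives from trap `a+1`
during an execution without arrivals (Lemma `unique`): `xrec m β γ j = x_{3m-j}`,
with `x_{3m} = 0`, and for `a = 3m - j`, `y_a = x_a + γ_a`,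
`x_{a-1} = ⌊y_a/2⌋` if `β_a + ⌊y_a/2⌋ ≤ m`, and `x_{a-1} = β_a + y_a - m - 1`
otherwise. In particular `xrec m β γ (3m) = x₀ = s(C_l)` is the number of agents
released by the line. -/
def xrec (m : ℕ) (β γ : ℕ → ℕ) : ℕ → ℕ
  | 0 => 0
  | j + 1 =>
    let a := 3 * m - j
    let y := xrec m β γ j + γ a
    if β a + y / 2 ≤ m then y / 2 else β a + y - (m + 1)

/-- `y_a = x_a + γ_a`: the total number of agents visiting the gate of trap `a`. -/
def yval (m : ℕ) (β γ : ℕ → ℕ) (a : ℕ) : ℕ := xrec m β γ (3 * m - a) + γ a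

/-- Predicted number of agents in the inner states of trap `a` in the silent
configuration `C̄_l`. -/
def betaBar (m : ℕ) (β γ : ℕ → ℕ) (a : ℕ) : ℕ :=
  if β a + yval m β γ a / 2 ≤ m then β a + yval m β γ a / 2 else m

/-- Predicted number of agents in the gate state of trap `a` in the silent
configuration `C̄_l`. -/
def gammaBar (m : ℕ) (β γ : ℕ → ℕ) (a : ℕ) : ℕ :=
  if β a + yval m β γ a / 2 ≤ m then yval m β γ a % 2 else 1

/-- The surplus `s(C_l)`: the number of agents released by the line before reaching
the silent configuration, when no agents arrive at the entrance gate. -/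
def sOfLine (m : ℕ) (β γ : ℕ → ℕ) : ℕ := xrec m β γ (3 * m)

/-- A configuration of a line of traps is tidy if, within each trap, every
overloaded inner state (occupied by at least two agents) has a higher index
than every gap (unoccupied inner state) of that trap. -/
def TidyLine {m N : ℕ} (c : Fin N → LineSt m) : Prop :=
  ∀ (a : Fin (3 * m)) (b b' : Fin (m + 1)), (b : ℕ) ≠ 0 → (b' : ℕ) ≠ 0 →
    2 ≤ ((Finset.univ : Finset (Fin N)).filter fun i => c i = Sum.inl (a, b)).card →
    ((Finset.univ : Finset (Fin N)).filter fun i => c i = Sum.inl (a, b')).card = 0 →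
    (b' : ℕ) < (b : ℕ)

/-- `ρ_a(C_l)`, the excess of trap `a` (the number of tokens of trap `a`). -/
noncomputable def rhoOf {m N : ℕ} (c : Fin N → LineSt m) (a : ℕ) : ℕ :=
  if 1 ≤ a ∧ a ≤ 3 * m then
    if betaOf c a + gammaOf c a / 2 ≤ m then gammaOf c a / 2
    else betaOf c a + gammaOf c a - (m + 1)
  else 0

/-- `r(C_l)`, the total number of tokens in the line. -/
noncomputable def rOfLine {m N : ℕ} (c : Fin N → LineSt m) : ℕ :=
  ∑ a ∈ Finset.Icc 1 (3 * m), rhoOf c a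

/-- `α_a(C)` (allocation vector entry). -/
noncomputable def alphaOf {m N : ℕ} (c : Fin N → LineSt m) (a : ℕ) : ℕ :=
  min (betaOf c a + gammaOf c a / 2) m

/-- `δ_a(C)` (target gate vector entry). -/
noncomputable def deltaOf {m N : ℕ} (c : Fin N → LineSt m) (a : ℕ) : ℕ :=
  if betaOf c a + gammaOf c a / 2 ≤ m then gammaOf c a % 2 else 1

/-- A configuration is silent if no interaction can change it. -/
def LineSilent {m N : ℕ} (c : Fin N → LineSt m) : Prop :=
  ∀ p : SchedPair N, pstep (lineDelta m) c p = c

/-! ### Auxiliary machinery for the proof -/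

section Aux

variable {m N : ℕ}

/-- `xrec` unfolding. -/
lemma xrec_succ (m : ℕ) (β γ : ℕ → ℕ) (j : ℕ) :
    xrec m β γ (j + 1) =
      if β (3*m-j) + (xrec m β γ j + γ (3*m-j)) / 2 ≤ m
      then (xrec m β γ j + γ (3*m-j)) / 2
      else β (3*m-j) + (xrec m β γ j + γ (3*m-j)) - (m + 1) := rfl

lemma xrec_congr {β γ β' γ' : ℕ → ℕ} (A : ℕ)
    (h : ∀ a, A < a → β a = β' a ∧ γ a = γ' a) :
    ∀ j, j ≤ 3*m - A → xrec m β γ j = xrec m β' γ' j := by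
  intro j
  induction j with
  | zero => intro _; rfl
  | succ j ih =>
    intro hj
    have hj' : j ≤ 3*m - A := by omega
    have ha : A < 3*m - j := by omega
    rw [xrec_succ, xrec_succ, ih hj', (h _ ha).1, (h _ ha).2]

lemma xrec_congr_from {β γ β' γ' : ℕ → ℕ} (j0 : ℕ)
    (hj0 : xrec m β γ j0 = xrec m β' γ' j0)
    (h : ∀ a, a ≤ 3*m - j0 → β a = β' a ∧ γ a = γ' a) :
    ∀ j, j0 ≤ j → xrec m β γ j = xrec m β' γ' j := by
  intro j hj
  induction j with
  | zero => rfl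
  | succ j ih =>
    rcases Nat.lt_or_ge j0 (j+1) with h1 | h1
    · have hj' : j0 ≤ j := by omega
      have ha : 3*m - j ≤ 3*m - j0 := by omega
      rw [xrec_succ, xrec_succ, ih hj', (h _ ha).1, (h _ ha).2]
    · have : j0 = j + 1 := by omega
      rw [← this]; exact hj0

lemma bar_congr {β γ β' γ' : ℕ → ℕ} (a : ℕ) (hβ : β a = β' a) (hγ : γ a = γ' a)
    (hx : xrec m β γ (3*m - a) = xrec m β' γ' (3*m - a)) :
    betaBar m β γ a = betaBar m β' γ' a ∧ gammaBar m β γ a = gammaBar m β' γ' a := by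
  unfold betaBar gammaBar yval
  rw [hβ, hγ, hx]
  exact ⟨rfl, rfl⟩

lemma arith_inner {β γ β' γ' : ℕ → ℕ} (A : ℕ) (hA1 : 1 ≤ A) (hA2 : A ≤ 3*m)
    (hb : β A = β' A + 1) (hg : γ' A = γ A + 1) (hfull : m + 1 ≤ β A)
    (hoff : ∀ a, a ≠ A → β a = β' a ∧ γ a = γ' a) :
    (∀ a, 1 ≤ a → a ≤ 3*m →
      betaBar m β γ a = betaBar m β' γ' a ∧ gammaBar m β γ a = gammaBar m β' γ' a) ∧
    xrec m β γ (3*m) = xrec m β' γ' (3*m) := by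
  have h0 : ∀ j, j ≤ 3*m - A → xrec m β γ j = xrec m β' γ' j :=
    xrec_congr A (fun a ha => hoff a (by omega))
  have hidx : 3*m - (3*m - A) = A := by omega
  have h1 : xrec m β γ (3*m - A + 1) = xrec m β' γ' (3*m - A + 1) := by
    rw [xrec_succ, xrec_succ, hidx, h0 _ le_rfl, hg, hb]
    split_ifs <;> omega
  have h2 : ∀ j, 3*m - A + 1 ≤ j → xrec m β γ j = xrec m β' γ' j :=
    xrec_congr_from _ h1 (fun a ha => hoff a (by omega))
  refine ⟨fun a ha1 ha2 => ?_, h2 _ (by omega)⟩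
  rcases eq_or_ne a A with rfl | hne
  · have hy : yval m β γ a = xrec m β γ (3*m - a) + γ a := rfl
    have hy' : yval m β' γ' a = xrec m β γ (3*m - a) + γ a + 1 := by
      unfold yval; rw [← h0 _ le_rfl, hg]; omega
    constructor
    · unfold betaBar; rw [hy, hy', hb]; split_ifs <;> omega
    · unfold gammaBar; rw [hy, hy', hb]; split_ifs <;> omega
  · refine bar_congr a (hoff a hne).1 (hoff a hne).2 ?_
    rcases Nat.lt_or_ge a A with h | h
    · exact h2 _ (by omega)
    · exact h0 _ (by omega)

lemma arith_gate {β γ β' γ' : ℕ → ℕ} (A : ℕ) (hA1 : 1 ≤ A) (hA2 : A ≤ 3*m)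
    (hb : β' A = β A + 1) (hg : γ A = γ' A + 2)
    (hg2 : 2 ≤ A → γ' (A-1) = γ (A-1) + 1) (hbA1 : β (A-1) = β' (A-1))
    (hoff : ∀ a, a ≠ A → a ≠ A - 1 → β a = β' a ∧ γ a = γ' a) :
    (∀ a, 1 ≤ a → a ≤ 3*m →
      betaBar m β γ a = betaBar m β' γ' a ∧ gammaBar m β γ a = gammaBar m β' γ' a) ∧
    (2 ≤ A → xrec m β γ (3*m) = xrec m β' γ' (3*m)) ∧
    (A = 1 → xrec m β γ (3*m) = xrec m β' γ' (3*m) + 1) := by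
  have h0 : ∀ j, j ≤ 3*m - A → xrec m β γ j = xrec m β' γ' j :=
    xrec_congr A (fun a ha => hoff a (by omega) (by omega))
  have hidx : 3*m - (3*m - A) = A := by omega
  have h1 : xrec m β γ (3*m - A + 1) = xrec m β' γ' (3*m - A + 1) + 1 := by
    rw [xrec_succ, xrec_succ, hidx, ← h0 _ le_rfl, hg, hb]
    split_ifs <;> omega
  have h2 : 2 ≤ A → xrec m β γ (3*m - A + 2) = xrec m β' γ' (3*m - A + 2) := by
    intro hA
    have e1 : (3*m - A + 2) = (3*m - A + 1) + 1 := by omega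
    have e2 : 3*m - (3*m - A + 1) = A - 1 := by omega
    have t1 := xrec_succ m β γ (3*m - A + 1)
    have t2 := xrec_succ m β' γ' (3*m - A + 1)
    rw [e1, t1, t2, e2, h1, hg2 hA, hbA1]
    split_ifs <;> omega
  have h3 : 2 ≤ A → ∀ j, 3*m - A + 2 ≤ j → xrec m β γ j = xrec m β' γ' j := by
    intro hA
    exact xrec_congr_from _ (h2 hA) (fun a ha => hoff a (by omega) (by omega))
  refine ⟨fun a ha1 ha2 => ?_, fun hA => h3 hA _ (by omega), fun hA => ?_⟩
  · rcases eq_or_ne a A with rfl | hne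
    · have hy : yval m β γ a = xrec m β' γ' (3*m - a) + γ a := by
        unfold yval; rw [h0 _ le_rfl]
      have hy' : yval m β' γ' a = xrec m β' γ' (3*m - a) + γ' a := rfl
      constructor
      · unfold betaBar; rw [hy, hy', hb, hg]; split_ifs <;> omega
      · unfold gammaBar; rw [hy, hy', hb, hg]; split_ifs <;> omega
    · rcases eq_or_ne a (A-1) with rfl | hne2
      · have hA : 2 ≤ A := by omega
        have e2 : 3*m - (A - 1) = 3*m - A + 1 := by omega
        have hyv : yval m β γ (A-1) = yval m β' γ' (A-1) := by
          unfold yval; rw [e2, h1, hg2 hA]; omega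
        unfold betaBar gammaBar; rw [hyv, hbA1]; exact ⟨rfl, rfl⟩
      · refine bar_congr a (hoff a hne hne2).1 (hoff a hne hne2).2 ?_
        rcases Nat.lt_or_ge a A with h | h
        · exact h3 (by omega) _ (by omega)
        · exact h0 _ (by omega)
  · subst hA
    have e : 3*m = 3*m - 1 + 1 := by omega
    rw [e]; exact h1

/-! ### Counting lemmas -/

lemma sum_two (f g : Fin N → ℕ) (i j : Fin N) (hij : i ≠ j)
    (h : ∀ k, k ≠ i → k ≠ j → f k = g k) :
    (∑ k, f k) + (g i + g j) = (∑ k, g k) + (f i + f j) := by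
  classical
  have hji : j ∈ (univ : Finset (Fin N)).erase i := by
    simp [Finset.mem_erase, Ne.symm hij]
  have e1 : ∑ k ∈ ((univ : Finset (Fin N)).erase i).erase j, f k
      = ∑ k ∈ ((univ : Finset (Fin N)).erase i).erase j, g k := by
    refine Finset.sum_congr rfl (fun k hk => ?_)
    simp only [Finset.mem_erase] at hk
    exact h k hk.2.1 hk.1
  have f2 := Finset.sum_erase_add ((univ : Finset (Fin N)).erase i) f hji
  have f1 := Finset.sum_erase_add (univ : Finset (Fin N)) f (Finset.mem_univ i)
  have g2 := Finset.sum_erase_add ((univ : Finset (Fin N)).erase i) g hji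
  have g1 := Finset.sum_erase_add (univ : Finset (Fin N)) g (Finset.mem_univ i)
  omega

lemma betaOf_shift (c c' : Fin N → LineSt m) (i j : Fin N)
    (hij : i ≠ j) (hoff : ∀ k, k ≠ i → k ≠ j → c' k = c k)
    (s0 n1 n2 : LineSt m) (hci : c i = s0) (hcj : c j = s0)
    (hni : c' i = n1) (hnj : c' j = n2) (a : ℕ) :
    betaOf c' a
        + ((if (∃ p : Fin (3*m) × Fin (m+1), s0 = Sum.inl p ∧ (p.1 : ℕ) = a - 1 ∧ 1 ≤ a ∧ (p.2 : ℕ) ≠ 0) then 1 else 0)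
          + (if (∃ p : Fin (3*m) × Fin (m+1), s0 = Sum.inl p ∧ (p.1 : ℕ) = a - 1 ∧ 1 ≤ a ∧ (p.2 : ℕ) ≠ 0) then 1 else 0)) =
    betaOf c a
        + ((if (∃ p : Fin (3*m) × Fin (m+1), n1 = Sum.inl p ∧ (p.1 : ℕ) = a - 1 ∧ 1 ≤ a ∧ (p.2 : ℕ) ≠ 0) then 1 else 0)
          + (if (∃ p : Fin (3*m) × Fin (m+1), n2 = Sum.inl p ∧ (p.1 : ℕ) = a - 1 ∧ 1 ≤ a ∧ (p.2 : ℕ) ≠ 0) then 1 else 0)) := by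
  unfold betaOf
  rw [Finset.card_filter, Finset.card_filter]
  have h := sum_two
    (fun k => if (∃ p : Fin (3*m) × Fin (m+1), c' k = Sum.inl p ∧ (p.1 : ℕ) = a - 1 ∧ 1 ≤ a ∧ (p.2 : ℕ) ≠ 0) then 1 else 0)
    (fun k => if (∃ p : Fin (3*m) × Fin (m+1), c k = Sum.inl p ∧ (p.1 : ℕ) = a - 1 ∧ 1 ≤ a ∧ (p.2 : ℕ) ≠ 0) then 1 else 0)
    i j hij (fun k h1 h2 => by simp only [hoff k h1 h2])
  simpa only [hci, hcj, hni, hnj] using h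

lemma gammaOf_shift (c c' : Fin N → LineSt m) (i j : Fin N)
    (hij : i ≠ j) (hoff : ∀ k, k ≠ i → k ≠ j → c' k = c k)
    (s0 n1 n2 : LineSt m) (hci : c i = s0) (hcj : c j = s0)
    (hni : c' i = n1) (hnj : c' j = n2) (a : ℕ) :
    gammaOf c' a
        + ((if (∃ p : Fin (3*m) × Fin (m+1), s0 = Sum.inl p ∧ (p.1 : ℕ) = a - 1 ∧ 1 ≤ a ∧ (p.2 : ℕ) = 0) then 1 else 0)
          + (if (∃ p : Fin (3*m) × Fin (m+1), s0 = Sum.inl p ∧ (p.1 : ℕ) = a - 1 ∧ 1 ≤ a ∧ (p.2 : ℕ) = 0) then 1 else 0)) =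
    gammaOf c a
        + ((if (∃ p : Fin (3*m) × Fin (m+1), n1 = Sum.inl p ∧ (p.1 : ℕ) = a - 1 ∧ 1 ≤ a ∧ (p.2 : ℕ) = 0) then 1 else 0)
          + (if (∃ p : Fin (3*m) × Fin (m+1), n2 = Sum.inl p ∧ (p.1 : ℕ) = a - 1 ∧ 1 ≤ a ∧ (p.2 : ℕ) = 0) then 1 else 0)) := by
  unfold gammaOf
  rw [Finset.card_filter, Finset.card_filter]
  have h := sum_two
    (fun k => if (∃ p : Fin (3*m) × Fin (m+1), c' k = Sum.inl p ∧ (p.1 : ℕ) = a - 1 ∧ 1 ≤ a ∧ (p.2 : ℕ) = 0) then 1 else 0)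
    (fun k => if (∃ p : Fin (3*m) × Fin (m+1), c k = Sum.inl p ∧ (p.1 : ℕ) = a - 1 ∧ 1 ≤ a ∧ (p.2 : ℕ) = 0) then 1 else 0)
    i j hij (fun k h1 h2 => by simp only [hoff k h1 h2])
  simpa only [hci, hcj, hni, hnj] using h

lemma xCount_shift (c c' : Fin N → LineSt m) (i j : Fin N)
    (hij : i ≠ j) (hoff : ∀ k, k ≠ i → k ≠ j → c' k = c k)
    (s0 n1 n2 : LineSt m) (hci : c i = s0) (hcj : c j = s0)
    (hni : c' i = n1) (hnj : c' j = n2) :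
    xCount c' + ((if s0 = Sum.inr () then 1 else 0) + (if s0 = Sum.inr () then 1 else 0)) =
    xCount c + ((if n1 = Sum.inr () then 1 else 0) + (if n2 = Sum.inr () then 1 else 0)) := by
  unfold xCount
  rw [Finset.card_filter, Finset.card_filter]
  have h := sum_two
    (fun k => if c' k = Sum.inr () then 1 else 0)
    (fun k => if c k = Sum.inr () then 1 else 0)
    i j hij (fun k h1 h2 => by simp only [hoff k h1 h2])
  simpa only [hci, hcj, hni, hnj] using h

lemma cnt_shift (c c' : Fin N → LineSt m) (i j : Fin N)
    (hij : i ≠ j) (hoff : ∀ k, k ≠ i → k ≠ j → c' k = c k)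
    (s0 n1 n2 : LineSt m) (hci : c i = s0) (hcj : c j = s0)
    (hni : c' i = n1) (hnj : c' j = n2) (s : LineSt m) :
    ((univ : Finset (Fin N)).filter fun k => c' k = s).card
        + ((if s0 = s then 1 else 0) + (if s0 = s then 1 else 0)) =
    ((univ : Finset (Fin N)).filter fun k => c k = s).card
        + ((if n1 = s then 1 else 0) + (if n2 = s then 1 else 0)) := by
  rw [Finset.card_filter, Finset.card_filter]
  have h := sum_two
    (fun k => if c' k = s then 1 else 0)
    (fun k => if c k = s then 1 else 0)
    i j hij (fun k h1 h2 => by simp only [hoff k h1 h2])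
  simpa only [hci, hcj, hni, hnj] using h

lemma exS_inl (q : Fin (3*m) × Fin (m+1)) (Φ : Fin (3*m) × Fin (m+1) → Prop) :
    (∃ p : Fin (3*m) × Fin (m+1), (Sum.inl q : LineSt m) = Sum.inl p ∧ Φ p) ↔ Φ q := by
  constructor
  · rintro ⟨p, hp, h⟩
    obtain rfl := Sum.inl.inj hp
    exact h
  · intro h; exact ⟨q, rfl, h⟩

lemma exS_inr (Φ : Fin (3*m) × Fin (m+1) → Prop) :
    (∃ p : Fin (3*m) × Fin (m+1), (Sum.inr () : LineSt m) = Sum.inl p ∧ Φ p) ↔ False := by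
  constructor
  · rintro ⟨p, hp, -⟩; cases hp
  · exact False.elim

lemma two_le_cnt {c : Fin N → LineSt m} {i j : Fin N} {s : LineSt m}
    (hi : c i = s) (hj : c j = s) (hij : i ≠ j) :
    2 ≤ ((univ : Finset (Fin N)).filter fun k => c k = s).card := by
  have hsub : ({i, j} : Finset (Fin N)) ⊆ (univ : Finset (Fin N)).filter fun k => c k = s := by
    intro k hk
    simp only [Finset.mem_insert, Finset.mem_singleton] at hk
    rcases hk with rfl | rfl <;> simp [hi, hj]
  calc 2 = ({i, j} : Finset (Fin N)).card := (Finset.card_pair hij).symm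
    _ ≤ _ := Finset.card_le_card hsub

/-! ### `pstep` basic facts -/

lemma pstep_fst {S : Type} {n : ℕ} (δ : S → S → S × S) (c : Fin n → S) (p : SchedPair n) :
    pstep δ c p p.1.1 = (δ (c p.1.1) (c p.1.2)).1 := by
  unfold pstep; rw [if_pos rfl]

lemma pstep_snd {S : Type} {n : ℕ} (δ : S → S → S × S) (c : Fin n → S) (p : SchedPair n) :
    pstep δ c p p.1.2 = (δ (c p.1.1) (c p.1.2)).2 := by
  unfold pstep; rw [if_neg (Ne.symm p.2), if_pos rfl]

lemma pstep_other {S : Type} {n : ℕ} (δ : S → S → S × S) (c : Fin n → S) (p : SchedPair n)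
    (k : Fin n) (h1 : k ≠ p.1.1) (h2 : k ≠ p.1.2) : pstep δ c p k = c k := by
  unfold pstep; rw [if_neg h1, if_neg h2]

lemma pstep_id {S : Type} {n : ℕ} (δ : S → S → S × S) (c : Fin n → S) (p : SchedPair n)
    (h : δ (c p.1.1) (c p.1.2) = (c p.1.1, c p.1.2)) : pstep δ c p = c := by
  funext k
  unfold pstep
  split_ifs with h1 h2
  · subst h1; rw [h]
  · subst h2; rw [h]
  · rfl

lemma lineDelta_inner (q : Fin (3*m) × Fin (m+1)) (h : (q.2 : ℕ) ≠ 0) :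
    lineDelta m (Sum.inl q) (Sum.inl q) = (Sum.inl q, Sum.inl (q.1, q.2 - 1)) := by
  simp [lineDelta, h]

lemma lineDelta_gate (q : Fin (3*m) × Fin (m+1)) (h0 : (q.2 : ℕ) = 0) (h1 : (q.1 : ℕ) ≠ 0) :
    lineDelta m (Sum.inl q) (Sum.inl q) =
      (Sum.inl (q.1, Fin.last m), Sum.inl (⟨(q.1 : ℕ) - 1, by have := q.1.isLt; omega⟩, 0)) := by
  simp [lineDelta, h0, h1]

lemma lineDelta_exit (q : Fin (3*m) × Fin (m+1)) (h0 : (q.2 : ℕ) = 0) (h1 : (q.1 : ℕ) = 0) :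
    lineDelta m (Sum.inl q) (Sum.inl q) = (Sum.inl (q.1, Fin.last m), Sum.inr ()) := by
  simp [lineDelta, h0, h1]

lemma step_shape (c : Fin N → LineSt m) (p : SchedPair N) :
    pstep (lineDelta m) c p = c ∨
    ∃ q : Fin (3*m) × Fin (m+1), c p.1.1 = Sum.inl q ∧ c p.1.2 = Sum.inl q := by
  rcases h1 : c p.1.1 with q1 | u1
  · rcases h2 : c p.1.2 with q2 | u2
    · by_cases hq : q1 = q2
      · subst hq; exact Or.inr ⟨q1, rfl, rfl⟩
      · left; apply pstep_id; rw [h1, h2]; simp [lineDelta, hq]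
    · left; apply pstep_id; rw [h1, h2]; simp [lineDelta]
  · rcases h2 : c p.1.2 with q2 | u2
    · left; apply pstep_id; rw [h1, h2]; simp [lineDelta]
    · left; apply pstep_id; rw [h1, h2]; simp [lineDelta]

lemma fin_sub_one {m : ℕ} (b : Fin (m+1)) (hb : (b : ℕ) ≠ 0) :
    ((b - 1 : Fin (m+1)) : ℕ) = (b : ℕ) - 1 := by
  rw [Fin.coe_sub_one, if_neg]
  intro h
  rw [h] at hb
  exact hb rfl

end Aux

section Aux2

variable {m N : ℕ}

lemma inl_eq_inl (a a' : Fin (3*m)) (b b' : Fin (m+1)) :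
    ((Sum.inl (a, b) : LineSt m) = Sum.inl (a', b')) ↔ (a = a' ∧ b = b') := by simp

lemma inr_eq_inl (a : Fin (3*m)) (b : Fin (m+1)) :
    ((Sum.inr () : LineSt m) = Sum.inl (a, b)) ↔ False := by simp

lemma inl_eq_inr (s : Fin (3*m) × Fin (m+1)) :
    ((Sum.inl s : LineSt m) = Sum.inr ()) ↔ False := by simp

lemma bcond_inl (q1 : Fin (3*m)) (q2 : Fin (m+1)) (a : ℕ) :
    (∃ p : Fin (3*m) × Fin (m+1),
        (Sum.inl (q1, q2) : LineSt m) = Sum.inl p ∧ (p.1 : ℕ) = a - 1 ∧ 1 ≤ a ∧ (p.2 : ℕ) ≠ 0)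
      ↔ ((q1 : ℕ) = a - 1 ∧ 1 ≤ a ∧ (q2 : ℕ) ≠ 0) := by
  rw [exS_inl]

lemma bcond_inr (a : ℕ) :
    (∃ p : Fin (3*m) × Fin (m+1),
        (Sum.inr () : LineSt m) = Sum.inl p ∧ (p.1 : ℕ) = a - 1 ∧ 1 ≤ a ∧ (p.2 : ℕ) ≠ 0)
      ↔ False :=
  exS_inr _

lemma gcond_inl (q1 : Fin (3*m)) (q2 : Fin (m+1)) (a : ℕ) :
    (∃ p : Fin (3*m) × Fin (m+1),
        (Sum.inl (q1, q2) : LineSt m) = Sum.inl p ∧ (p.1 : ℕ) = a - 1 ∧ 1 ≤ a ∧ (p.2 : ℕ) = 0)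
      ↔ ((q1 : ℕ) = a - 1 ∧ 1 ≤ a ∧ (q2 : ℕ) = 0) := by
  rw [exS_inl]

lemma gcond_inr (a : ℕ) :
    (∃ p : Fin (3*m) × Fin (m+1),
        (Sum.inr () : LineSt m) = Sum.inl p ∧ (p.1 : ℕ) = a - 1 ∧ 1 ≤ a ∧ (p.2 : ℕ) = 0)
      ↔ False :=
  exS_inr _

/-- `betaOf` as a sum of single-state counts. -/
lemma beta_as_sum (c : Fin N → LineSt m) (A : Fin (3*m)) :
    betaOf c ((A : ℕ) + 1) =
      ∑ b ∈ (univ : Finset (Fin (m+1))).filter (fun b : Fin (m+1) => (b : ℕ) ≠ 0),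
        ((univ : Finset (Fin N)).filter fun k => c k = Sum.inl (A, b)).card := by
  rw [← Finset.card_biUnion]
  · unfold betaOf
    congr 1
    ext k
    simp only [Finset.mem_filter, Finset.mem_biUnion, Finset.mem_univ, true_and]
    constructor
    · rintro ⟨p, hp, h1, -, h3⟩
      refine ⟨p.2, h3, ?_⟩
      have e1 : p.1 = A := Fin.ext (by omega)
      rw [hp, ← e1]
    · rintro ⟨b, hb, hcb⟩
      exact ⟨(A, b), hcb, by simp, by omega, hb⟩
  · intro b _ b' _ hbb'
    simp only [Finset.disjoint_left, Finset.mem_filter, Finset.mem_univ, true_and]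
    rintro k hk hk'
    rw [hk] at hk'
    exact hbb' (congrArg Prod.snd (Sum.inl.inj hk'))

lemma gamma_as_cnt (c : Fin N → LineSt m) (A : Fin (3*m)) :
    gammaOf c ((A : ℕ) + 1) =
      ((univ : Finset (Fin N)).filter fun k => c k = Sum.inl (A, 0)).card := by
  unfold gammaOf
  congr 1
  ext k
  simp only [Finset.mem_filter, Finset.mem_univ, true_and]
  constructor
  · rintro ⟨⟨p1, p2⟩, hp, h1, -, h3⟩
    have e1 : p1 = A := Fin.ext (by simpa using h1)
    have e2 : p2 = 0 := Fin.ext (by simpa using h3)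
    rw [e1, e2] at hp
    exact hp
  · intro h
    exact ⟨(A, 0), h, by simp, by omega, by simp⟩

lemma card_inner_index :
    ((univ : Finset (Fin (m+1))).filter fun b : Fin (m+1) => (b : ℕ) ≠ 0).card = m := by
  have he : ((univ : Finset (Fin (m+1))).filter fun b : Fin (m+1) => (b : ℕ) ≠ 0)
      = (univ : Finset (Fin (m+1))).erase 0 := by
    ext b
    simp only [Finset.mem_filter, Finset.mem_erase, Finset.mem_univ, true_and, and_true, ne_eq, Fin.ext_iff, Fin.val_zero]
  rw [he, Finset.card_erase_of_mem (Finset.mem_univ _), Finset.card_univ, Fintype.card_fin]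
  omega

lemma full_of_tidy (c : Fin N → LineSt m) (ht : TidyLine c) (q1 : Fin (3*m)) (q2 : Fin (m+1))
    (hq : (q2 : ℕ) = 1)
    (h2 : 2 ≤ ((univ : Finset (Fin N)).filter fun k => c k = Sum.inl (q1, q2)).card) :
    m + 1 ≤ betaOf c ((q1 : ℕ) + 1) := by
  rw [beta_as_sum]
  set S := (univ : Finset (Fin (m+1))).filter (fun b : Fin (m+1) => (b : ℕ) ≠ 0) with hS
  have hb1 : q2 ∈ S := by
    rw [hS]; simp only [Finset.mem_filter, Finset.mem_univ, true_and]; omega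
  have hcard : S.card = m := card_inner_index
  have hrest : ∀ b ∈ S.erase q2,
      1 ≤ ((univ : Finset (Fin N)).filter fun k => c k = Sum.inl (q1, b)).card := by
    intro b hb
    rw [hS] at hb
    simp only [Finset.mem_erase, Finset.mem_filter, Finset.mem_univ, true_and] at hb
    by_contra hc
    push_neg at hc
    have h0 : ((univ : Finset (Fin N)).filter fun k => c k = Sum.inl (q1, b)).card = 0 := by omega
    have := ht q1 q2 b (by omega) hb.2 h2 h0
    omega
  have e1 : ∑ b ∈ S.erase q2, ((univ : Finset (Fin N)).filter fun k => c k = Sum.inl (q1, b)).card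
      + ((univ : Finset (Fin N)).filter fun k => c k = Sum.inl (q1, q2)).card
      = ∑ b ∈ S, ((univ : Finset (Fin N)).filter fun k => c k = Sum.inl (q1, b)).card :=
    Finset.sum_erase_add S _ hb1
  have e2 : (S.erase q2).card ≤ ∑ b ∈ S.erase q2,
      ((univ : Finset (Fin N)).filter fun k => c k = Sum.inl (q1, b)).card := by
    calc (S.erase q2).card = ∑ _b ∈ S.erase q2, 1 := by simp
      _ ≤ _ := Finset.sum_le_sum hrest
  have e3 : (S.erase q2).card = m - 1 := by rw [Finset.card_erase_of_mem hb1, hcard]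
  omega

/-- Tidiness is preserved by one interaction. -/
lemma tidy_pstep (c : Fin N → LineSt m) (p : SchedPair N) (ht : TidyLine c) :
    TidyLine (pstep (lineDelta m) c p) := by
  rcases step_shape c p with heq | ⟨⟨q1, q2⟩, hci, hcj⟩
  · rwa [heq]
  · have hij : p.1.1 ≠ p.1.2 := p.2
    have hoff : ∀ k, k ≠ p.1.1 → k ≠ p.1.2 → pstep (lineDelta m) c p k = c k :=
      fun k h1 h2 => pstep_other _ c p k h1 h2
    have h2q : 2 ≤ ((univ : Finset (Fin N)).filter fun k => c k = Sum.inl (q1, q2)).card :=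
      two_le_cnt hci hcj hij
    have hd1 : pstep (lineDelta m) c p p.1.1
        = (lineDelta m (Sum.inl (q1, q2)) (Sum.inl (q1, q2))).1 := by
      rw [pstep_fst, hci, hcj]
    have hd2 : pstep (lineDelta m) c p p.1.2
        = (lineDelta m (Sum.inl (q1, q2)) (Sum.inl (q1, q2))).2 := by
      rw [pstep_snd, hci, hcj]
    intro A b b' hb hb' hcb hcb'
    by_cases hq2 : (q2 : ℕ) ≠ 0
    · -- inner interaction
      have hni : pstep (lineDelta m) c p p.1.1 = Sum.inl (q1, q2) := by
        rw [hd1, lineDelta_inner _ hq2]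
      have hnj : pstep (lineDelta m) c p p.1.2 = Sum.inl (q1, q2 - 1) := by
        rw [hd2, lineDelta_inner _ hq2]
      have hsub : ((q2 - 1 : Fin (m+1)) : ℕ) = (q2 : ℕ) - 1 := fin_sub_one q2 hq2
      have eb := cnt_shift c _ _ _ hij hoff _ _ _ hci hcj hni hnj (Sum.inl (A, b))
      have eb' := cnt_shift c _ _ _ hij hoff _ _ _ hci hcj hni hnj (Sum.inl (A, b'))
      simp only [inl_eq_inl] at eb eb'
      by_cases hA : q1 = A
      · subst hA
        simp only [true_and] at eb eb'
        -- facts about b'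
        have hq2q : q2 - 1 ≠ q2 := by
          intro h
          have := congrArg Fin.val h
          omega
        have hb'facts : ((univ : Finset (Fin N)).filter fun i => c i = Sum.inl (q1, b')).card = 0
            ∧ q2 ≠ b' ∧ q2 - 1 ≠ b' := by
          by_cases h3 : q2 = b'
          · exfalso
            subst h3
            rw [if_pos rfl, if_neg hq2q, hcb'] at eb'
            omega
          · rw [if_neg h3, hcb'] at eb'
            by_cases h4 : q2 - 1 = b'
            · exfalso; rw [if_pos h4] at eb'; omega
            · rw [if_neg h4] at eb'
              exact ⟨by omega, h3, h4⟩
        obtain ⟨hb'0, h3', h4'⟩ := hb'facts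
        by_cases h2 : q2 - 1 = b
        · -- the new agent may have landed on b; use the overloaded state q2 instead
          have hvb : (b : ℕ) = (q2 : ℕ) - 1 := by rw [← h2, hsub]
          have hlt := ht q1 q2 b' hq2 hb' h2q hb'0
          have hne : (b' : ℕ) ≠ (q2 : ℕ) - 1 := by
            intro h
            exact h4' (Fin.ext (by omega))
          omega
        · have hcnt_b : 2 ≤ ((univ : Finset (Fin N)).filter fun i => c i = Sum.inl (q1, b)).card := by
            rw [if_neg h2] at eb
            by_cases h1 : q2 = b
            · subst h1
              rw [if_pos rfl] at eb
              omega
            · rw [if_neg h1] at eb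
              omega
          exact ht q1 b b' hb hb' hcnt_b hb'0
      · -- different trap: counts unchanged
        have hAn : ∀ b0 : Fin (m+1), ¬(q1 = A ∧ b0 = b) := fun b0 h => hA h.1
        have hAn' : ∀ b0 : Fin (m+1), ¬(q1 = A ∧ b0 = b') := fun b0 h => hA h.1
        rw [if_neg (hAn q2), if_neg (hAn (q2-1))] at eb
        rw [if_neg (hAn' q2), if_neg (hAn' (q2-1))] at eb'
        exact ht A b b' hb hb' (by omega) (by omega)
    · -- gate interaction
      push_neg at hq2
      have hbq2 : ∀ b0 : Fin (m+1), (b0 : ℕ) ≠ 0 → ¬(q1 = A ∧ q2 = b0) := by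
        intro b0 hb0 h
        rw [h.2] at hq2
        exact hb0 hq2
      by_cases hq1 : (q1 : ℕ) ≠ 0
      · have hni : pstep (lineDelta m) c p p.1.1 = Sum.inl (q1, Fin.last m) := by
          rw [hd1, lineDelta_gate _ hq2 hq1]
        have hnj : pstep (lineDelta m) c p p.1.2
            = Sum.inl (⟨(q1 : ℕ) - 1, by have := q1.isLt; omega⟩, 0) := by
          rw [hd2, lineDelta_gate _ hq2 hq1]
        have eb := cnt_shift c _ _ _ hij hoff _ _ _ hci hcj hni hnj (Sum.inl (A, b))
        have eb' := cnt_shift c _ _ _ hij hoff _ _ _ hci hcj hni hnj (Sum.inl (A, b'))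
        simp only [inl_eq_inl] at eb eb'
        rw [if_neg (hbq2 b hb),
            if_neg (fun h : _ ∧ (0 : Fin (m+1)) = b => hb (by rw [← h.2]; rfl))] at eb
        rw [if_neg (hbq2 b' hb'),
            if_neg (fun h : _ ∧ (0 : Fin (m+1)) = b' => hb' (by rw [← h.2]; rfl))] at eb'
        by_cases hL : q1 = A ∧ Fin.last m = b
        · -- b is the top inner state
          have hbm : (b : ℕ) = m := by rw [← hL.2]; exact Fin.val_last m
          have hne : b' ≠ b := by
            intro h
            rw [h] at hcb'
            omega
          have : (b' : ℕ) ≠ (b : ℕ) := fun h => hne (Fin.ext h)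
          have := b'.isLt
          omega
        · rw [if_neg hL] at eb
          by_cases hL' : q1 = A ∧ Fin.last m = b'
          · exfalso; rw [if_pos hL'] at eb'; omega
          · rw [if_neg hL'] at eb'
            exact ht A b b' hb hb' (by omega) (by omega)
      · push_neg at hq1
        have hni : pstep (lineDelta m) c p p.1.1 = Sum.inl (q1, Fin.last m) := by
          rw [hd1, lineDelta_exit _ hq2 hq1]
        have hnj : pstep (lineDelta m) c p p.1.2 = Sum.inr () := by
          rw [hd2, lineDelta_exit _ hq2 hq1]
        have eb := cnt_shift c _ _ _ hij hoff _ _ _ hci hcj hni hnj (Sum.inl (A, b))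
        have eb' := cnt_shift c _ _ _ hij hoff _ _ _ hci hcj hni hnj (Sum.inl (A, b'))
        simp only [inl_eq_inl, inr_eq_inl, if_false] at eb eb'
        rw [if_neg (hbq2 b hb)] at eb
        rw [if_neg (hbq2 b' hb')] at eb'
        by_cases hL : q1 = A ∧ Fin.last m = b
        · have hbm : (b : ℕ) = m := by rw [← hL.2]; exact Fin.val_last m
          have hne : b' ≠ b := by
            intro h
            rw [h] at hcb'
            omega
          have : (b' : ℕ) ≠ (b : ℕ) := fun h => hne (Fin.ext h)
          have := b'.isLt
          omega
        · rw [if_neg hL] at eb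
          by_cases hL' : q1 = A ∧ Fin.last m = b'
          · exfalso; rw [if_pos hL'] at eb'; omega
          · rw [if_neg hL'] at eb'
            exact ht A b b' hb hb' (by omega) (by omega)

end Aux2

section Aux3

variable {m N : ℕ}

lemma silent_cnt_le_one (hm : 1 ≤ m) (c : Fin N → LineSt m) (hs : LineSilent c)
    (q : Fin (3*m) × Fin (m+1)) :
    ((univ : Finset (Fin N)).filter fun k => c k = Sum.inl q).card ≤ 1 := by
  by_contra hcon
  push_neg at hcon
  obtain ⟨i, hi, j, hj, hij⟩ := Finset.one_lt_card.mp hcon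
  simp only [Finset.mem_filter] at hi hj
  have hp := hs ⟨(i, j), hij⟩
  have h1 := congrFun hp i
  have h2 := congrFun hp j
  rw [show pstep (lineDelta m) c ⟨(i, j), hij⟩ i = (lineDelta m (c i) (c j)).1 from
    pstep_fst _ _ _] at h1
  rw [show pstep (lineDelta m) c ⟨(i, j), hij⟩ j = (lineDelta m (c i) (c j)).2 from
    pstep_snd _ _ _] at h2
  rw [hi.2, hj.2] at h1 h2
  by_cases hq2 : (q.2 : ℕ) ≠ 0
  · rw [lineDelta_inner q hq2] at h2
    have := congrArg Fin.val (congrArg Prod.snd (Sum.inl.inj h2))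
    rw [fin_sub_one q.2 hq2] at this
    omega
  · push_neg at hq2
    by_cases hq1 : (q.1 : ℕ) ≠ 0
    · rw [lineDelta_gate q hq2 hq1] at h1
      have := congrArg Fin.val (congrArg Prod.snd (Sum.inl.inj h1))
      rw [Fin.val_last] at this
      omega
    · push_neg at hq1
      rw [lineDelta_exit q hq2 hq1] at h1
      have := congrArg Fin.val (congrArg Prod.snd (Sum.inl.inj h1))
      rw [Fin.val_last] at this
      omega

lemma silent_beta_gamma (hm : 1 ≤ m) (c : Fin N → LineSt m) (hs : LineSilent c) :
    ∀ a, 1 ≤ a → a ≤ 3*m → betaOf c a ≤ m ∧ gammaOf c a ≤ 1 := by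
  intro a h1 h2
  have hA : a - 1 < 3*m := by omega
  have ha : a = ((⟨a - 1, hA⟩ : Fin (3*m)) : ℕ) + 1 := by simp; omega
  constructor
  · rw [ha, beta_as_sum]
    calc ∑ b ∈ (univ : Finset (Fin (m+1))).filter (fun b : Fin (m+1) => (b : ℕ) ≠ 0),
          ((univ : Finset (Fin N)).filter fun k => c k = Sum.inl (⟨a - 1, hA⟩, b)).card
        ≤ ∑ _b ∈ (univ : Finset (Fin (m+1))).filter (fun b : Fin (m+1) => (b : ℕ) ≠ 0), 1 :=
          Finset.sum_le_sum (fun b _ => silent_cnt_le_one hm c hs (⟨a - 1, hA⟩, b))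
      _ = m := by rw [Finset.sum_const, smul_eq_mul, mul_one, card_inner_index]
  · rw [ha, gamma_as_cnt]
    exact silent_cnt_le_one hm c hs (⟨a - 1, hA⟩, 0)

lemma silent_xrec {β γ : ℕ → ℕ} (h : ∀ a, 1 ≤ a → a ≤ 3*m → β a ≤ m ∧ γ a ≤ 1) :
    ∀ j, j ≤ 3*m → xrec m β γ j = 0 := by
  intro j
  induction j with
  | zero => intro _; rfl
  | succ j ih =>
    intro hj
    have h1 := h (3*m - j) (by omega) (by omega)
    rw [xrec_succ, ih (by omega), if_pos (by omega)]
    omega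

lemma silent_bars {β γ : ℕ → ℕ} (h : ∀ a, 1 ≤ a → a ≤ 3*m → β a ≤ m ∧ γ a ≤ 1) :
    ∀ a, 1 ≤ a → a ≤ 3*m → betaBar m β γ a = β a ∧ gammaBar m β γ a = γ a := by
  intro a h1 h2
  have hy : yval m β γ a = γ a := by
    unfold yval
    rw [silent_xrec h _ (by omega)]
    omega
  have hβ := (h a h1 h2).1
  have hγ := (h a h1 h2).2
  unfold betaBar gammaBar
  rw [hy]
  constructor <;> rw [if_pos (by omega)] <;> omega

/-! ### Termination measure -/

def wSt (m : ℕ) : LineSt m → ℕ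
  | Sum.inl q => (m+2) * ((q.1 : ℕ) + 1) + (q.2 : ℕ)
  | Sum.inr _ => 0

def MOf {m N : ℕ} (c : Fin N → LineSt m) : ℕ := ∑ i, wSt m (c i)

lemma M_decrease (c : Fin N → LineSt m) (p : SchedPair N)
    (hne : pstep (lineDelta m) c p ≠ c) :
    MOf (pstep (lineDelta m) c p) < MOf c := by
  rcases step_shape c p with heq | ⟨q, hci, hcj⟩
  · exact absurd heq hne
  · have hij : p.1.1 ≠ p.1.2 := p.2
    have hoff : ∀ k, k ≠ p.1.1 → k ≠ p.1.2 → pstep (lineDelta m) c p k = c k :=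
      fun k h1 h2 => pstep_other _ c p k h1 h2
    have key : MOf (pstep (lineDelta m) c p) + (wSt m (c p.1.1) + wSt m (c p.1.2))
        = MOf c + (wSt m (pstep (lineDelta m) c p p.1.1)
            + wSt m (pstep (lineDelta m) c p p.1.2)) :=
      sum_two (fun k => wSt m (pstep (lineDelta m) c p k)) (fun k => wSt m (c k))
        p.1.1 p.1.2 hij (fun k h1 h2 => by
          show wSt m (pstep (lineDelta m) c p k) = wSt m (c k)
          rw [hoff k h1 h2])
    rw [pstep_fst, pstep_snd, hci, hcj] at key
    by_cases hq2 : (q.2 : ℕ) ≠ 0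
    · rw [lineDelta_inner q hq2] at key
      simp only [wSt] at key
      rw [fin_sub_one q.2 hq2] at key
      omega
    · push_neg at hq2
      by_cases hq1 : (q.1 : ℕ) ≠ 0
      · rw [lineDelta_gate q hq2 hq1] at key
        simp only [wSt, Fin.val_last] at key
        have e3 : ((0 : Fin (m+1)) : ℕ) = 0 := rfl
        have e2 : (q.1 : ℕ) - 1 + 1 = (q.1 : ℕ) := by omega
        rw [e3, e2] at key
        have e1 : (m+2) * ((q.1 : ℕ) + 1) = (m+2) * (q.1 : ℕ) + (m+2) := by ring
        omega
      · push_neg at hq1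
        rw [lineDelta_exit q hq2 hq1] at key
        simp only [wSt, Fin.val_last] at key
        have e1 : (m+2) * ((q.1 : ℕ) + 1) = (m + 2) * (q.1 : ℕ) + (m + 2) := by ring
        omega

def consSched {N : ℕ} (p : SchedPair N) (σ : ℕ → SchedPair N) : ℕ → SchedPair N
  | 0 => p
  | t+1 => σ t

lemma ptraj_cons {S : Type} {n : ℕ} (δ : S → S → S × S) (c : Fin n → S) (p : SchedPair n)
    (σ : ℕ → SchedPair n) :
    ∀ T, ptraj δ c (consSched p σ) (T+1) = ptraj δ (pstep δ c p) σ T := by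
  intro T
  induction T with
  | zero => rfl
  | succ T ih =>
    show pstep δ (ptraj δ c (consSched p σ) (T+1)) (consSched p σ (T+1)) = _
    rw [ih]
    rfl

lemma exists_silent (hN : 2 ≤ N) (c : Fin N → LineSt m) :
    ∃ (σ : ℕ → SchedPair N) (T : ℕ), LineSilent (ptraj (lineDelta m) c σ T) := by
  have p0 : SchedPair N :=
    ⟨(⟨0, by omega⟩, ⟨1, by omega⟩), fun h => by simpa using congrArg Fin.val h⟩
  suffices H : ∀ n (c : Fin N → LineSt m), MOf c ≤ n →
      ∃ (σ : ℕ → SchedPair N) (T : ℕ), LineSilent (ptraj (lineDelta m) c σ T) from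
    H (MOf c) c le_rfl
  intro n
  induction n with
  | zero =>
    intro c hc
    by_cases hs : LineSilent c
    · exact ⟨fun _ => p0, 0, hs⟩
    · exfalso
      obtain ⟨p, hp⟩ := not_forall.mp hs
      have := M_decrease c p hp
      omega
  | succ n ih =>
    intro c hc
    by_cases hs : LineSilent c
    · exact ⟨fun _ => p0, 0, hs⟩
    · obtain ⟨p, hp⟩ := not_forall.mp hs
      obtain ⟨σ, T, hT⟩ := ih (pstep (lineDelta m) c p)
        (by have := M_decrease c p hp; omega)
      exact ⟨consSched p σ, T+1, by rw [ptraj_cons]; exact hT⟩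

end Aux3

section Aux4

variable {m N : ℕ}

lemma step_invariants (hm : 1 ≤ m) (c : Fin N → LineSt m) (p : SchedPair N)
    (ht : TidyLine c) :
    (∀ a, 1 ≤ a → a ≤ 3*m →
      betaBar m (betaOf (pstep (lineDelta m) c p)) (gammaOf (pstep (lineDelta m) c p)) a
        = betaBar m (betaOf c) (gammaOf c) a ∧
      gammaBar m (betaOf (pstep (lineDelta m) c p)) (gammaOf (pstep (lineDelta m) c p)) a
        = gammaBar m (betaOf c) (gammaOf c) a) ∧
    xCount (pstep (lineDelta m) c p)
        + sOfLine m (betaOf (pstep (lineDelta m) c p)) (gammaOf (pstep (lineDelta m) c p))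
      = xCount c + sOfLine m (betaOf c) (gammaOf c) := by
  rcases step_shape c p with heq | ⟨⟨q1, q2⟩, hci, hcj⟩
  · rw [heq]; exact ⟨fun a _ _ => ⟨rfl, rfl⟩, rfl⟩
  · have hij : p.1.1 ≠ p.1.2 := p.2
    have hoff : ∀ k, k ≠ p.1.1 → k ≠ p.1.2 → pstep (lineDelta m) c p k = c k :=
      fun k h1 h2 => pstep_other _ c p k h1 h2
    have hd1 : pstep (lineDelta m) c p p.1.1
        = (lineDelta m (Sum.inl (q1, q2)) (Sum.inl (q1, q2))).1 := by
      rw [pstep_fst, hci, hcj]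
    have hd2 : pstep (lineDelta m) c p p.1.2
        = (lineDelta m (Sum.inl (q1, q2)) (Sum.inl (q1, q2))).2 := by
      rw [pstep_snd, hci, hcj]
    by_cases hq2 : (q2 : ℕ) ≠ 0
    · -- inner interaction
      have hni : pstep (lineDelta m) c p p.1.1 = Sum.inl (q1, q2) := by
        rw [hd1, lineDelta_inner _ hq2]
      have hnj : pstep (lineDelta m) c p p.1.2 = Sum.inl (q1, q2 - 1) := by
        rw [hd2, lineDelta_inner _ hq2]
      have hsub : ((q2 - 1 : Fin (m+1)) : ℕ) = (q2 : ℕ) - 1 := fin_sub_one q2 hq2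
      have hxc : xCount (pstep (lineDelta m) c p) = xCount c := by
        have h := xCount_shift c _ _ _ hij hoff _ _ _ hci hcj hni hnj
        simp only [inl_eq_inr, if_false] at h
        omega
      by_cases hq21 : (q2 : ℕ) = 1
      · -- an agent trickles into the gate
        have hB : ∀ a, betaOf c a = betaOf (pstep (lineDelta m) c p) a
            + (if a = (q1 : ℕ) + 1 then 1 else 0) := by
          intro a
          have h := betaOf_shift c _ _ _ hij hoff _ _ _ hci hcj hni hnj a
          simp only [bcond_inl] at h
          rw [hsub] at h
          split_ifs at h ⊢ <;> omega
        have hG : ∀ a, gammaOf (pstep (lineDelta m) c p) a = gammaOf c a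
            + (if a = (q1 : ℕ) + 1 then 1 else 0) := by
          intro a
          have h := gammaOf_shift c _ _ _ hij hoff _ _ _ hci hcj hni hnj a
          simp only [gcond_inl] at h
          rw [hsub] at h
          split_ifs at h ⊢ <;> omega
        have hfull : m + 1 ≤ betaOf c ((q1 : ℕ) + 1) :=
          full_of_tidy c ht q1 q2 hq21 (two_le_cnt hci hcj hij)
        obtain ⟨hbars, hx⟩ := arith_inner (m := m)
          (β := betaOf c) (γ := gammaOf c)
          (β' := betaOf (pstep (lineDelta m) c p)) (γ' := gammaOf (pstep (lineDelta m) c p))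
          ((q1 : ℕ) + 1) (by omega) (by have := q1.isLt; omega)
          (by have h := hB ((q1 : ℕ) + 1); rw [if_pos rfl] at h; omega)
          (by have h := hG ((q1 : ℕ) + 1); rw [if_pos rfl] at h; omega)
          hfull
          (fun a ha => ⟨by have h := hB a; rw [if_neg ha] at h; omega,
            by have h := hG a; rw [if_neg ha] at h; omega⟩)
        refine ⟨fun a h1 h2 => ⟨(hbars a h1 h2).1.symm, (hbars a h1 h2).2.symm⟩, ?_⟩
        rw [hxc]
        unfold sOfLine
        rw [hx]
      · -- purely inner move: β and γ unchanged
        have hB : betaOf (pstep (lineDelta m) c p) = betaOf c := by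
          funext a
          have h := betaOf_shift c _ _ _ hij hoff _ _ _ hci hcj hni hnj a
          simp only [bcond_inl] at h
          rw [hsub] at h
          split_ifs at h <;> omega
        have hG : gammaOf (pstep (lineDelta m) c p) = gammaOf c := by
          funext a
          have h := gammaOf_shift c _ _ _ hij hoff _ _ _ hci hcj hni hnj a
          simp only [gcond_inl] at h
          rw [hsub] at h
          split_ifs at h <;> omega
        rw [hB, hG, hxc]
        exact ⟨fun a _ _ => ⟨rfl, rfl⟩, rfl⟩
    · -- gate interaction
      push_neg at hq2
      by_cases hq1 : (q1 : ℕ) ≠ 0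
      · have hni : pstep (lineDelta m) c p p.1.1 = Sum.inl (q1, Fin.last m) := by
          rw [hd1, lineDelta_gate _ hq2 hq1]
        have hnj : pstep (lineDelta m) c p p.1.2
            = Sum.inl (⟨(q1 : ℕ) - 1, by have := q1.isLt; omega⟩, 0) := by
          rw [hd2, lineDelta_gate _ hq2 hq1]
        have hxc : xCount (pstep (lineDelta m) c p) = xCount c := by
          have h := xCount_shift c _ _ _ hij hoff _ _ _ hci hcj hni hnj
          simp only [inl_eq_inr, if_false] at h
          omega
        have hB : ∀ a, betaOf (pstep (lineDelta m) c p) a = betaOf c a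
            + (if a = (q1 : ℕ) + 1 then 1 else 0) := by
          intro a
          have h := betaOf_shift c _ _ _ hij hoff _ _ _ hci hcj hni hnj a
          simp only [bcond_inl, Fin.val_last] at h
          have e3 : ((0 : Fin (m+1)) : ℕ) = 0 := rfl
          rw [e3] at h
          split_ifs at h ⊢ <;> omega
        have hG : ∀ a, gammaOf (pstep (lineDelta m) c p) a
              + ((if a = (q1 : ℕ) + 1 then 1 else 0) + (if a = (q1 : ℕ) + 1 then 1 else 0))
            = gammaOf c a + (if a = (q1 : ℕ) then 1 else 0) := by
          intro a
          have h := gammaOf_shift c _ _ _ hij hoff _ _ _ hci hcj hni hnj a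
          simp only [gcond_inl, Fin.val_last] at h
          have e3 : ((0 : Fin (m+1)) : ℕ) = 0 := rfl
          rw [e3] at h
          split_ifs at h ⊢ <;> omega
        obtain ⟨hbars, hx2, hx1⟩ := arith_gate (m := m)
          (β := betaOf c) (γ := gammaOf c)
          (β' := betaOf (pstep (lineDelta m) c p)) (γ' := gammaOf (pstep (lineDelta m) c p))
          ((q1 : ℕ) + 1) (by omega) (by have := q1.isLt; omega)
          (by have h := hB ((q1 : ℕ) + 1); rw [if_pos rfl] at h; omega)
          (by have h := hG ((q1 : ℕ) + 1); rw [if_pos rfl, if_neg (by omega)] at h; omega)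
          (by intro _
              have h := hG (q1 : ℕ)
              rw [if_neg (by omega), if_pos rfl] at h
              have e : (q1 : ℕ) + 1 - 1 = (q1 : ℕ) := rfl
              rw [e]
              omega)
          (by have h := hB (q1 : ℕ); rw [if_neg (by omega)] at h
              have e : (q1 : ℕ) + 1 - 1 = (q1 : ℕ) := rfl
              rw [e]; omega)
          (fun a ha1 ha2 => ⟨by have h := hB a; rw [if_neg ha1] at h; omega,
            by have h := hG a
               rw [if_neg ha1, if_neg (by omega : ¬ a = (q1 : ℕ))] at h
               omega⟩)
        refine ⟨fun a h1 h2 => ⟨(hbars a h1 h2).1.symm, (hbars a h1 h2).2.symm⟩, ?_⟩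
        rw [hxc]
        unfold sOfLine
        rw [hx2 (by omega)]
      · -- exit gate
        push_neg at hq1
        have hni : pstep (lineDelta m) c p p.1.1 = Sum.inl (q1, Fin.last m) := by
          rw [hd1, lineDelta_exit _ hq2 hq1]
        have hnj : pstep (lineDelta m) c p p.1.2 = Sum.inr () := by
          rw [hd2, lineDelta_exit _ hq2 hq1]
        have hxc : xCount (pstep (lineDelta m) c p) = xCount c + 1 := by
          have h := xCount_shift c _ _ _ hij hoff _ _ _ hci hcj hni hnj
          simp only [inl_eq_inr, if_false] at h
          rw [if_pos trivial] at h
          omega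
        have hB : ∀ a, betaOf (pstep (lineDelta m) c p) a = betaOf c a
            + (if a = (q1 : ℕ) + 1 then 1 else 0) := by
          intro a
          have h := betaOf_shift c _ _ _ hij hoff _ _ _ hci hcj hni hnj a
          simp only [bcond_inl, bcond_inr, Fin.val_last, if_false] at h
          split_ifs at h ⊢ <;> omega
        have hG : ∀ a, gammaOf (pstep (lineDelta m) c p) a
              + ((if a = (q1 : ℕ) + 1 then 1 else 0) + (if a = (q1 : ℕ) + 1 then 1 else 0))
            = gammaOf c a := by
          intro a
          have h := gammaOf_shift c _ _ _ hij hoff _ _ _ hci hcj hni hnj a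
          simp only [gcond_inl, gcond_inr, Fin.val_last, if_false] at h
          split_ifs at h ⊢ <;> omega
        obtain ⟨hbars, hx2, hx1⟩ := arith_gate (m := m)
          (β := betaOf c) (γ := gammaOf c)
          (β' := betaOf (pstep (lineDelta m) c p)) (γ' := gammaOf (pstep (lineDelta m) c p))
          ((q1 : ℕ) + 1) (by omega) (by have := q1.isLt; omega)
          (by have h := hB ((q1 : ℕ) + 1); rw [if_pos rfl] at h; omega)
          (by have h := hG ((q1 : ℕ) + 1); rw [if_pos rfl] at h; omega)
          (fun h => absurd h (by omega))
          (by have h := hB (q1 : ℕ); rw [if_neg (by omega)] at h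
              have e : (q1 : ℕ) + 1 - 1 = (q1 : ℕ) := rfl
              rw [e]; omega)
          (fun a ha1 ha2 => ⟨by have h := hB a; rw [if_neg ha1] at h; omega,
            by have h := hG a; rw [if_neg ha1] at h; omega⟩)
        refine ⟨fun a h1 h2 => ⟨(hbars a h1 h2).1.symm, (hbars a h1 h2).2.symm⟩, ?_⟩
        rw [hxc]
        unfold sOfLine
        have h1 := hx1 (by omega)
        omega

end Aux4

/-- Lemma `unique`: Suppose a line of traps executes from an initial
(tidy) configuration `C_l` and no agents arrive at its entrance gate during the
execution. Then the line eventually reaches a silent configuration `C̄_l`, and the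
inner vector `β(C̄_l)`, the gate vector `γ(C̄_l)` and the number `s(C_l)` of agents
released by the line to state `X` before reaching `C̄_l` depend solely on `C_l` —
they are the same for every sequence of interactions chosen by the scheduler —
and are given explicitly by: with `y_a = x_a + γ_a(C_l)` and `x_{3m} = 0`,
if `β_a(C_l) + ⌊y_a/2⌋ ≤ m` then `β_a(C̄_l) = β_a(C_l) + ⌊y_a/2⌋`,
`γ_a(C̄_l) = y_a mod 2` and `x_{a-1} = ⌊y_a/2⌋`; otherwise `β_a(C̄_l) = m`,
`γ_a(C̄_l) = 1` and `x_{a-1} = β_a(C_l) + y_a - m - 1`; and `s(C_l) = x₀`. -/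
theorem line_unique_silent_configuration
    (m N : ℕ) (hm : 1 ≤ m) (hN : 2 ≤ N)
    (c0 : Fin N → LineSt m) (htidy : TidyLine c0) :
    -- the line eventually reaches a silent configuration
    (∃ (σ : ℕ → SchedPair N) (T : ℕ), LineSilent (ptraj (lineDelta m) c0 σ T)) ∧
    -- and every silent configuration that is reached has the predicted inner vector,
    -- gate vector, and number of released agents, all depending solely on `C_l`
    ∀ (σ : ℕ → SchedPair N) (T : ℕ), LineSilent (ptraj (lineDelta m) c0 σ T) →
      (∀ a, 1 ≤ a → a ≤ 3 * m →
        betaOf (ptraj (lineDelta m) c0 σ T) a = betaBar m (betaOf c0) (gammaOf c0) a ∧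
        gammaOf (ptraj (lineDelta m) c0 σ T) a = gammaBar m (betaOf c0) (gammaOf c0) a) ∧
      xCount (ptraj (lineDelta m) c0 σ T) =
        xCount c0 + sOfLine m (betaOf c0) (gammaOf c0) := by
  constructor
  · exact exists_silent hN c0
  · intro σ T hsil
    have inv : ∀ t, TidyLine (ptraj (lineDelta m) c0 σ t) ∧
        (∀ a, 1 ≤ a → a ≤ 3*m →
          betaBar m (betaOf (ptraj (lineDelta m) c0 σ t)) (gammaOf (ptraj (lineDelta m) c0 σ t)) a
            = betaBar m (betaOf c0) (gammaOf c0) a ∧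
          gammaBar m (betaOf (ptraj (lineDelta m) c0 σ t)) (gammaOf (ptraj (lineDelta m) c0 σ t)) a
            = gammaBar m (betaOf c0) (gammaOf c0) a) ∧
        xCount (ptraj (lineDelta m) c0 σ t)
            + sOfLine m (betaOf (ptraj (lineDelta m) c0 σ t)) (gammaOf (ptraj (lineDelta m) c0 σ t))
          = xCount c0 + sOfLine m (betaOf c0) (gammaOf c0) := by
      intro t
      induction t with
      | zero => exact ⟨htidy, fun a _ _ => ⟨rfl, rfl⟩, rfl⟩
      | succ t ih =>
        obtain ⟨h1, h2, h3⟩ := ih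
        obtain ⟨h2', h3'⟩ := step_invariants hm (ptraj (lineDelta m) c0 σ t) (σ t) h1
        exact ⟨tidy_pstep _ (σ t) h1,
          fun a ha1 ha2 => ⟨((h2' a ha1 ha2).1).trans (h2 a ha1 ha2).1,
            ((h2' a ha1 ha2).2).trans (h2 a ha1 ha2).2⟩,
          h3'.trans h3⟩
    obtain ⟨hT1, hT2, hT3⟩ := inv T
    have hbg := silent_beta_gamma hm _ hsil
    have hbars := silent_bars (m := m) hbg
    have h0 : sOfLine m (betaOf (ptraj (lineDelta m) c0 σ T))
        (gammaOf (ptraj (lineDelta m) c0 σ T)) = 0 :=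
      silent_xrec hbg (3*m) le_rfl
    refine ⟨fun a h1 h2 => ⟨?_, ?_⟩, ?_⟩
    · rw [← (hT2 a h1 h2).1]
      exact ((hbars a h1 h2).1).symm
    · rw [← (hT2 a h1 h2).2]
      exact ((hbars a h1 h2).2).symm
    · omega
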